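/- Consider the sequence of 0–1-weighted recursions x_{n+1}⁰ = (N−k+1)·x_n^{k−1}, x_{n+1}¹ = x_n⁰ + x_n¹ + ⋯ + x_n^{k−1}, and x_{n+1}^j = x_n^{j−1} + x_n^{k−1} for 2 ≤ j ≤ k−1, encoded by a k × k matrix A = A_N (depending on a parameter N ≥ k). Then every entry of A^k is a polynomial in N of degree at most 1; consequently there is a constant C ≥ 1 independent of N with ‖A^k‖ ≤ C·N (sum norm), and hence the spectral radius satisfies r(A) ≤ (C·N)^{1/k}. -/

import Mathlib

noncomputable def Amat (k : ℕ) (N : ℝ) : Matrix (Fin k) (Fin k) ℝ := fun i j =>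
  if i.val = 0 then (if j.val = k - 1 then N - k + 1 else 0)
  else if i.val = 1 then 1
  else if j.val = i.val - 1 ∨ j.val = k - 1 then 1 else 0

noncomputable def Emat (k : ℕ) : Matrix (Fin k) (Fin k) ℝ := fun i j =>
  if i.val = 0 ∧ j.val = k - 1 then 1 else 0

lemma amat_decomp (k : ℕ) (N : ℝ) : Amat k N = Amat k 0 + N • Emat k := by
  ext i j
  simp only [Amat, Emat, Matrix.add_apply, Matrix.smul_apply, smul_eq_mul]
  split_ifs <;> simp_all <;> ring

lemma bpow_zero (k : ℕ) (hk : 2 ≤ k) : ∀ (m : ℕ) (i j : Fin k), j.val = 0 → m < i.val →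
    ((Amat k 0) ^ m) i j = 0 := by
  intro m
  induction m with
  | zero =>
    intro i j hj hi
    simp [Matrix.one_apply, Fin.ext_iff, hj]
    omega
  | succ m ih =>
    intro i j hj hi
    rw [pow_succ', Matrix.mul_apply]
    apply Finset.sum_eq_zero
    intro l _
    have hi2 : 2 ≤ i.val := by omega
    have h0 : ¬ i.val = 0 := by omega
    have h1 : ¬ i.val = 1 := by omega
    have : Amat k 0 i l = if l.val = i.val - 1 ∨ l.val = k - 1 then 1 else 0 := by
      simp only [Amat, if_neg h0, if_neg h1]
    rw [this]
    split_ifs with h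
    · rcases h with h | h
      · rw [ih l j hj (by omega)]; ring
      · have : m < l.val := by have := i.isLt; omega
        rw [ih l j hj this]; ring
    · ring

lemma EXE (k : ℕ) (X : Matrix (Fin k) (Fin k) ℝ)
    (hX : ∀ i j : Fin k, i.val = k-1 → j.val = 0 → X i j = 0) :
    Emat k * X * Emat k = 0 := by
  ext i j
  rw [Matrix.mul_apply]
  simp only [Matrix.zero_apply]
  apply Finset.sum_eq_zero
  intro l _
  by_cases hl : l.val = 0 ∧ j.val = k-1
  · rw [Matrix.mul_apply]
    have h : ∑ m, Emat k i m * X m l = 0 := by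
      apply Finset.sum_eq_zero
      intro m _
      simp only [Emat]
      split_ifs with h
      · rw [hX m l h.2 hl.1]; ring
      · ring
    rw [h]; ring
  · have h : Emat k l j = 0 := by simp only [Emat, if_neg hl]
    rw [h]; ring

noncomputable def Pm (k n : ℕ) : Matrix (Fin k) (Fin k) ℝ :=
  ∑ j ∈ Finset.range n, (Amat k 0)^j * Emat k * (Amat k 0)^(n-1-j)

lemma PE (k : ℕ) (hk : 2 ≤ k) (n : ℕ) (hn : n < k) : Pm k n * Emat k = 0 := by
  unfold Pm
  rw [Finset.sum_mul]
  apply Finset.sum_eq_zero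
  intro j hj
  simp only [Finset.mem_range] at hj
  rw [mul_assoc ((Amat k 0)^j * Emat k), mul_assoc ((Amat k 0)^j),
    ← mul_assoc (Emat k)]
  have h0 : Emat k * (Amat k 0)^(n-1-j) * Emat k = 0 := by
    apply EXE
    intro a b ha hb
    apply bpow_zero k hk _ _ _ hb
    omega
  rw [h0, mul_zero]

lemma expand (k : ℕ) (hk : 2 ≤ k) : ∀ n, n ≤ k → ∀ N : ℝ,
    Amat k N ^ n = (Amat k 0)^n + N • Pm k n := by
  intro n
  induction n with
  | zero => intro _ N; simp [Pm]
  | succ n ih =>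
    intro hn N
    have hPE := PE k hk n (by omega)
    rw [pow_succ, ih (by omega) N, amat_decomp k N]
    have hPm : Pm k (n+1) = Pm k n * Amat k 0 + (Amat k 0)^n * Emat k := by
      unfold Pm
      rw [Finset.sum_range_succ, Finset.sum_mul]
      congr 1
      · apply Finset.sum_congr rfl
        intro j hj
        simp only [Finset.mem_range] at hj
        have h1 : n + 1 - 1 - j = (n - 1 - j) + 1 := by omega
        rw [h1, pow_succ, ← mul_assoc]
      · have h2 : n + 1 - 1 - n = 0 := by omega
        rw [h2, pow_zero, mul_one]
    rw [hPm, add_mul, mul_add, mul_add, mul_smul_comm, smul_mul_assoc,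
      smul_mul_assoc, mul_smul_comm, smul_smul, hPE, smul_zero, add_zero,
      ← pow_succ, smul_add]
    abel

lemma eig_pow {k : ℕ} (M : Matrix (Fin k) (Fin k) ℂ) (μ : ℂ) (v : Fin k → ℂ)
    (h : M.mulVec v = μ • v) : ∀ m, (M ^ m).mulVec v = μ ^ m • v := by
  intro m
  induction m with
  | zero => simp
  | succ m ih =>
    rw [pow_succ', ← Matrix.mulVec_mulVec, ih, Matrix.mulVec_smul, h, smul_smul, ← pow_succ]

lemma eig_bound {k : ℕ} (hk : 0 < k) (M : Matrix (Fin k) (Fin k) ℂ) (μ : ℂ)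
    (v : Fin k → ℂ) (hv : v ≠ 0) (h : M.mulVec v = μ • v) :
    ‖μ‖ ≤ ∑ i, ∑ j, ‖M i j‖ := by
  haveI : Nonempty (Fin k) := ⟨⟨0, hk⟩⟩
  obtain ⟨i0, -, hi0⟩ := Finset.exists_max_image Finset.univ (fun i => ‖v i‖) ⟨⟨0, hk⟩, Finset.mem_univ _⟩
  have hvpos : 0 < ‖v i0‖ := by
    by_contra hcon
    push_neg at hcon
    apply hv
    funext i
    have := hi0 i (Finset.mem_univ i)
    have : ‖v i‖ = 0 := le_antisymm (by linarith [norm_nonneg (v i0)]) (norm_nonneg _)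
    simpa using this
  have key : ‖μ‖ * ‖v i0‖ ≤ (∑ i, ∑ j, ‖M i j‖) * ‖v i0‖ := by
    calc ‖μ‖ * ‖v i0‖ = ‖μ * v i0‖ := (norm_mul _ _).symm
      _ = ‖M.mulVec v i0‖ := by rw [h]; rfl
      _ ≤ ∑ j, ‖M i0 j * v j‖ := by
          rw [Matrix.mulVec]
          exact norm_sum_le _ _
      _ ≤ ∑ j, ‖M i0 j‖ * ‖v i0‖ := by
          apply Finset.sum_le_sum
          intro j _
          rw [norm_mul]
          exact mul_le_mul_of_nonneg_left (hi0 j (Finset.mem_univ j)) (norm_nonneg _)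
      _ = (∑ j, ‖M i0 j‖) * ‖v i0‖ := (Finset.sum_mul _ _ _).symm
      _ ≤ (∑ i, ∑ j, ‖M i j‖) * ‖v i0‖ := by
          apply mul_le_mul_of_nonneg_right _ (norm_nonneg _)
          exact Finset.single_le_sum (f := fun i => ∑ j, ‖M i j‖)
            (fun i _ => Finset.sum_nonneg fun j _ => norm_nonneg _) (Finset.mem_univ i0)
  exact le_of_mul_le_mul_right key hvpos

lemma map_pow' {k : ℕ} (A : Matrix (Fin k) (Fin k) ℝ) (m : ℕ) :
    (A ^ m).map Complex.ofReal = (A.map Complex.ofReal) ^ m := by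
  have hco : (Complex.ofReal : ℝ → ℂ) = ⇑Complex.ofRealHom := rfl
  induction m with
  | zero => rw [pow_zero, pow_zero, hco, Matrix.map_one _ (map_zero _) (map_one _)]
  | succ m ih => rw [pow_succ, pow_succ, hco, Matrix.map_mul, ← hco, ih]

theorem stmt19 (k : ℕ) (hk : 2 ≤ k) :
    ∃ (P Q : Matrix (Fin k) (Fin k) ℝ) (C : ℝ), 1 ≤ C ∧
      ∀ N : ℝ, (k : ℝ) ≤ N →
        (∀ i j, ((Amat k N) ^ k) i j = P i j * N + Q i j) ∧
        (∑ i, ∑ j, |((Amat k N) ^ k) i j| ≤ C * N) ∧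
        (∀ (μ : ℂ) (v : Fin k → ℂ), v ≠ 0 →
          ((Amat k N).map Complex.ofReal).mulVec v = μ • v →
          ‖μ‖ ≤ (C * N) ^ ((k : ℝ)⁻¹)) := by
  set P := Pm k k with hP
  set Q := (Amat k 0) ^ k with hQ
  set SP := ∑ i, ∑ j, |P i j| with hSP
  set SQ := ∑ i, ∑ j, |Q i j| with hSQ
  have hSPnn : 0 ≤ SP := Finset.sum_nonneg fun i _ => Finset.sum_nonneg fun j _ => abs_nonneg _
  have hSQnn : 0 ≤ SQ := Finset.sum_nonneg fun i _ => Finset.sum_nonneg fun j _ => abs_nonneg _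
  refine ⟨P, Q, SP + SQ + 1, by linarith, ?_⟩
  intro N hN
  have hk2 : (2:ℝ) ≤ (k:ℝ) := by exact_mod_cast hk
  have hN1 : (1:ℝ) ≤ N := by linarith
  have hNpos : (0:ℝ) < N := by linarith
  have hexp := expand k hk k le_rfl N
  have ha : ∀ i j, ((Amat k N) ^ k) i j = P i j * N + Q i j := by
    intro i j
    rw [hexp]
    simp only [Matrix.add_apply, Matrix.smul_apply, smul_eq_mul]
    ring
  have hb : ∑ i, ∑ j, |((Amat k N) ^ k) i j| ≤ (SP + SQ + 1) * N := by
    have step : ∀ i j : Fin k, |((Amat k N) ^ k) i j| ≤ |P i j| * N + |Q i j| := by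
      intro i j
      rw [ha i j]
      calc |P i j * N + Q i j| ≤ |P i j * N| + |Q i j| := abs_add_le _ _
        _ = |P i j| * N + |Q i j| := by rw [abs_mul, abs_of_pos hNpos]
    calc ∑ i, ∑ j, |((Amat k N) ^ k) i j|
        ≤ ∑ i, ∑ j, (|P i j| * N + |Q i j|) :=
          Finset.sum_le_sum fun i _ => Finset.sum_le_sum fun j _ => step i j
      _ = SP * N + SQ := by
          rw [hSP, hSQ, Finset.sum_mul, ← Finset.sum_add_distrib]
          apply Finset.sum_congr rfl
          intro i _
          rw [Finset.sum_mul, ← Finset.sum_add_distrib]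
      _ ≤ (SP + SQ + 1) * N := by nlinarith
  refine ⟨ha, hb, ?_⟩
  intro μ v hv hmul
  have hCN1 : (1:ℝ) ≤ (SP + SQ + 1) * N := by nlinarith
  have heig := eig_pow _ _ _ hmul k
  rw [← map_pow'] at heig
  have habs := eig_bound (by omega) _ _ _ hv heig
  have habs2 : ‖μ‖ ^ k ≤ (SP + SQ + 1) * N := by
    rw [← norm_pow]
    refine le_trans habs (le_trans ?_ hb)
    apply le_of_eq
    apply Finset.sum_congr rfl
    intro i _
    apply Finset.sum_congr rfl
    intro j _
    rw [Matrix.map_apply, Complex.norm_real, Real.norm_eq_abs]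
  have hx : (0:ℝ) ≤ ‖μ‖ := norm_nonneg _
  have hkR : ((k:ℝ)) ≠ 0 := by positivity
  calc ‖μ‖ = (‖μ‖ ^ (k:ℕ)) ^ ((k:ℝ)⁻¹) := by
        rw [← Real.rpow_natCast (‖μ‖) k, ← Real.rpow_mul hx,
          mul_inv_cancel₀ hkR, Real.rpow_one]
    _ ≤ ((SP + SQ + 1) * N) ^ ((k:ℝ)⁻¹) :=
        Real.rpow_le_rpow (by positivity) habs2 (by positivity)
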